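/- arXiv:2409.00666 — 8 statements merged into one kernel-verified Lean document; each statement's English description precedes it below -/
import Mathlib

section
/- In any preference model, if (φ ∧ ψ) ⤳ χ holds then φ ⤳ (ψ → χ) holds. (Validity of axiom SH.) -/
/-- ⪰-maximal elements of X: u ∈ X such that any v ∈ X with v ⪰ u satisfies u ⪰ v. -/
def most {S : Type*} (r : S → S → Prop) (X : Set S) : Set S :=
  {u ∈ X | ∀ v ∈ X, r v u → r u v}

/-- Support: φ ⤳ ψ holds iff most(||φ||) ⊆ ||ψ||. -/
def supp {S : Type*} (r : S → S → Prop) (X Y : Set S) : Prop :=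
  most r X ⊆ Y

/-- Limitedness: nonempty truth sets have ⪰-maximal elements. -/
def limited {S : Type*} (r : S → S → Prop) : Prop :=
  ∀ X : Set S, X.Nonempty → (most r X).Nonempty
/-- validity of SH. -/
theorem stmt2 {S : Type*} (r : S → S → Prop) (A B C : Set S)
    (h : supp r (A ∩ B) C) : supp r A (Bᶜ ∪ C) := by
  intro u hu
  by_cases hb : u ∈ B
  · right
    exact h ⟨⟨hu.1, hb⟩, fun v hv => hu.2 v hv.1⟩
  · left; exact hb
end

section
/- In any preference model satisfying the limitedness condition, if ¬(φ ↔ ψ) ⤳ ⊥ holds then for every χ, φ ⤳ χ holds iff ψ ⤳ χ holds. (Validity of axiom LL+.) -/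
/-- validity of LL+. -/
theorem stmt3 {S : Type*} (r : S → S → Prop) (hlim : limited r) (A B : Set S)
    (h : supp r ((A \ B) ∪ (B \ A)) (∅ : Set S)) :
    ∀ C : Set S, supp r A C ↔ supp r B C := by
  have hempty : (A \ B ∪ B \ A) = ∅ := by
    by_contra he
    rcases hlim _ (Set.nonempty_iff_ne_empty.mpr he) with ⟨y, hy⟩
    exact h hy
  have hAB : A = B := by
    ext x
    constructor <;> intro hx <;> by_contra hc
    · exact (Set.eq_empty_iff_forall_notMem.mp hempty x) (Or.inl ⟨hx, hc⟩)
    · exact (Set.eq_empty_iff_forall_notMem.mp hempty x) (Or.inr ⟨hx, hc⟩)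
  intro C
  rw [hAB]
end

section
/- In any preference model, if φ ⤳ ψ and (φ ∧ ψ) ⤳ χ both hold, then φ ⤳ χ holds. (Validity of CUT.) -/
/-- validity of CUT. -/
theorem stmt6 {S : Type*} (r : S → S → Prop) (A B C : Set S)
    (h1 : supp r A B) (h2 : supp r (A ∩ B) C) : supp r A C := by
  intro u hu
  exact h2 ⟨⟨hu.1, h1 hu⟩, fun v hv hr => hu.2 v hv.1 hr⟩
end

section
/- In any preference model, if φ ⤳ ψ and χ ⤳ ψ both hold, then (φ ∨ χ) ⤳ ψ holds. (Validity of OR.) -/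
/-- validity of OR. -/
theorem stmt7 {S : Type*} (r : S → S → Prop) (A B C : Set S)
    (h1 : supp r A B) (h2 : supp r C B) : supp r (A ∪ C) B := by
  intro u hu
  obtain ⟨hmem, hmax⟩ := hu
  rcases hmem with h | h
  · exact h1 ⟨h, fun v hv => hmax v (Or.inl hv)⟩
  · exact h2 ⟨h, fun v hv => hmax v (Or.inr hv)⟩
end

section
/- Cautious monotonicity fails for the support operator: there exists a preference model satisfying the limitedness condition and formulas φ, ψ, χ such that φ ⤳ ψ and φ ⤳ χ hold but (φ ∧ ψ) ⤳ χ fails. -/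
def myr : Fin 3 → Fin 3 → Prop :=
  fun a b => a = b ∨ (a = 0 ∧ b = 1) ∨ (a = 1 ∧ b = 2)

/-- cautious monotonicity fails. -/
theorem stmt8 : ∃ (S : Type) (r : S → S → Prop), limited r ∧
    ∃ A B C : Set S, supp r A B ∧ supp r A C ∧ ¬ supp r (A ∩ B) C := by
  refine ⟨Fin 3, myr, ?_, Set.univ, {0, 2}, {0, 1}, ?_, ?_, ?_⟩
  · intro X ⟨x, hx⟩
    by_cases h0 : (0 : Fin 3) ∈ X
    · exact ⟨0, h0, fun v _ hv => by
        rcases hv with h | ⟨h, _⟩ | ⟨h, h'⟩ <;> simp_all [myr]⟩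
    · by_cases h1 : (1 : Fin 3) ∈ X
      · exact ⟨1, h1, fun v hv hr => by
          rcases hr with h | ⟨h, _⟩ | ⟨h, h'⟩ <;> simp_all [myr]⟩
      · have hx2 : x = 2 := by fin_cases x <;> simp_all
        exact ⟨2, hx2 ▸ hx, fun v hv hr => by
          rcases hr with h | ⟨h, h'⟩ | ⟨h, h'⟩ <;> simp_all [myr]⟩
  · intro u ⟨_, hu⟩
    have := hu 0 (Set.mem_univ _)
    fin_cases u <;> simp_all [myr]
  · intro u ⟨_, hu⟩
    have h0 := hu 0 (Set.mem_univ _)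
    have h1 := hu 1 (Set.mem_univ _)
    fin_cases u <;> simp_all [myr]
  · intro h
    have : (2 : Fin 3) ∈ most myr (Set.univ ∩ {0, 2}) := by
      refine ⟨⟨Set.mem_univ _, by simp⟩, ?_⟩
      intro v hv hr
      rcases hr with h | ⟨h, h'⟩ | ⟨h, h'⟩ <;> simp_all [myr]
    have := h this
    simp at this
end

section
/- In any preference model satisfying the limitedness condition, the lottery-paradox pattern is blocked: if for each i in a finite nonempty index set, ⊤ ⤳ ¬Tᵢ holds, and the truth sets of the Tᵢ cover S (i.e., ||⋀ᵢ ¬Tᵢ|| = ∅), and S is nonempty, then a contradiction follows; hence not all of the statements ⊤ ⤳ ¬Tᵢ can simultaneously hold in a nonempty model where some ticket always wins. -/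
/-- the lottery paradox is blocked. -/
theorem stmt10 {S : Type*} (r : S → S → Prop) [Nonempty S] (hlim : limited r)
    {ι : Type*} [Fintype ι] [Nonempty ι] (T : ι → Set S)
    (hsupp : ∀ i, supp r (Set.univ : Set S) (T i)ᶜ)
    (hcover : (⋂ i, (T i)ᶜ) = (∅ : Set S)) :
    False := by
  obtain ⟨s, hs⟩ := hlim Set.univ ⟨Classical.arbitrary S, trivial⟩
  have : s ∈ ⋂ i, (T i)ᶜ := Set.mem_iInter.2 fun i => hsupp i hs
  rw [hcover] at this
  exact this
end

section
/- In any preference model with limitedness, the translated Nec axiom holds: if ¬φ ⤳ ⊥ holds then ψ ⤳ φ holds for every formula ψ. -/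
/-- translated Nec axiom. -/
theorem stmt13 {S : Type*} (r : S → S → Prop) (hlim : limited r) (A : Set S)
    (h : supp r Aᶜ (∅ : Set S)) : ∀ B : Set S, supp r B A := by
  intro B x hx
  by_contra hA
  obtain ⟨y, hy⟩ := hlim Aᶜ ⟨x, hA⟩
  exact h hy
end

section
/- In any Trust model, the semantic counterpart of rule S5_F is sound: support formulas have uniform truth value within each partition class, i.e., if states s and w belong to the same partition class Sᵢ, then for all propositional φ, ψ: (φ ⤳ ψ holds at s) iff (φ ⤳ ψ holds at w); consequently, if a Boolean combination of support formulas implies χ at every state of the model, then at every state where that combination holds, ¬χ ⤳ ⊥ also holds. -/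
/-- Partition class of a state. -/
def cls {S I : Type*} (part : S → I) (s : S) : Set S := {u | part u = part s}

/-- Truth of a support formula at a state of a Trust model: evaluated within the
state's partition class. -/
def suppAt {S I : Type*} (part : S → I) (pref : I → S → S → Prop)
    (s : S) (X Y : Set S) : Prop :=
  most (pref (part s)) (X ∩ cls part s) ⊆ Y ∩ cls part s

/-- soundness of the semantic counterpart of S5_F in Trust models. -/
theorem stmt15 {S I : Type*} (part : S → I) (pref : I → S → S → Prop)
    (R : S → S → Prop) (hser : ∀ s : S, ∃ t, R s t) (htrans : Transitive R)
    (hlim : ∀ (i : I) (X : Set S),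
      (X ∩ {u | part u = i}).Nonempty →
      (most (pref i) (X ∩ {u | part u = i})).Nonempty) :
    (∀ (s w : S) (X Y : Set S), part s = part w →
        (suppAt part pref s X Y ↔ suppAt part pref w X Y)) ∧
    (∀ P : S → Prop, (∀ s w : S, part s = part w → (P s ↔ P w)) →
        ∀ χ : Set S, (∀ s : S, P s → s ∈ χ) →
          ∀ s : S, P s → suppAt part pref s χᶜ (∅ : Set S)) := by
  constructor
  · intro s w X Y hsw
    have hc : cls part s = cls part w := by
      ext u; simp [cls, hsw]
    simp [suppAt, hsw, hc]
  · intro P hP χ hχ s hs u hu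
    exfalso
    have hu1 : u ∈ χᶜ ∩ cls part s := hu.1
    have hpu : part u = part s := hu1.2
    exact hu1.1 (hχ u ((hP u s hpu).mpr hs))
end
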